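/- Let Γ0 > c > 0, t > 0, 0 < τ < t. With the linear utility Γ(d)=Γ0(1-d), the equation d_s(w;τ,p) = d_c(w;τ,p), i.e. 1 - c(1-(1-w)τ/t)/(wp) = 1 - p/(Γ0(1-(1-w)τ/t)), viewed as an equation in w ∈ (0,1) for fixed p, τ, has real solutions only if p² ≥ 4cΓ0·(τ/t)(1-τ/t), and in that case the solutions are w_{1,2} = ((p ∓ √(p² - 4cΓ0(τ/t)(1-τ/t)))/(2(τ/t)√(cΓ0)))². -/

import Mathlib

theorem threshold_intersection_points
    (Γ0 c t τ p w : ℝ)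
    (hcΓ : c < Γ0) (hc : 0 < c) (ht : 0 < t) (hτ0 : 0 < τ) (hτt : τ < t)
    (hp : 0 < p) (hw0 : 0 < w) (hw1 : w < 1)
    (heq : 1 - c * (1 - (1 - w) * (τ / t)) / (w * p) =
      1 - p / (Γ0 * (1 - (1 - w) * (τ / t)))) :
    p ^ 2 ≥ 4 * c * Γ0 * (τ / t) * (1 - τ / t) ∧
      (w = ((p - Real.sqrt (p ^ 2 - 4 * c * Γ0 * (τ / t) * (1 - τ / t))) /
          (2 * (τ / t) * Real.sqrt (c * Γ0))) ^ 2 ∨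
        w = ((p + Real.sqrt (p ^ 2 - 4 * c * Γ0 * (τ / t) * (1 - τ / t))) /
          (2 * (τ / t) * Real.sqrt (c * Γ0))) ^ 2) := by
  set r := τ / t with hr
  have hr0 : 0 < r := div_pos hτ0 ht
  have hr1 : r < 1 := (div_lt_one ht).mpr hτt
  have hΓ0 : 0 < Γ0 := hc.trans hcΓ
  have hA : 0 < 1 - (1 - w) * r := by nlinarith
  have hkey : c * Γ0 * (1 - (1 - w) * r) ^ 2 = p ^ 2 * w := by
    have h1 : w * p ≠ 0 := by positivity
    have h2 : Γ0 * (1 - (1 - w) * r) ≠ 0 := by positivity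
    field_simp at heq
    nlinarith [heq]
  have hDge : p ^ 2 ≥ 4 * c * Γ0 * r * (1 - r) := by
    nlinarith [hkey, sq_nonneg ((1 - r) - r * w), mul_pos hc hΓ0, hw0]
  refine ⟨hDge, ?_⟩
  set D := p ^ 2 - 4 * c * Γ0 * r * (1 - r) with hD
  have hD0 : 0 ≤ D := by linarith
  have hsD : Real.sqrt D ^ 2 = D := Real.sq_sqrt hD0
  have hscg : Real.sqrt (c * Γ0) ^ 2 = c * Γ0 := Real.sq_sqrt (by positivity)
  have hscg0 : 0 < Real.sqrt (c * Γ0) := Real.sqrt_pos.mpr (by positivity)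
  have hsw : Real.sqrt w ^ 2 = w := Real.sq_sqrt hw0.le
  have hsw0 : 0 < Real.sqrt w := Real.sqrt_pos.mpr hw0
  have hmain : Real.sqrt (c * Γ0) * (1 - (1 - w) * r) = p * Real.sqrt w := by
    have h1 : (Real.sqrt (c * Γ0) * (1 - (1 - w) * r)) ^ 2
        = (p * Real.sqrt w) ^ 2 := by
      rw [mul_pow, mul_pow, hscg, hsw]; exact hkey
    have h2 : 0 < Real.sqrt (c * Γ0) * (1 - (1 - w) * r) := by positivity
    have h3 : 0 < p * Real.sqrt w := by positivity
    calc Real.sqrt (c * Γ0) * (1 - (1 - w) * r)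
        = Real.sqrt ((Real.sqrt (c * Γ0) * (1 - (1 - w) * r)) ^ 2) :=
          (Real.sqrt_sq h2.le).symm
      _ = Real.sqrt ((p * Real.sqrt w) ^ 2) := by rw [h1]
      _ = p * Real.sqrt w := Real.sqrt_sq h3.le
  have hfac : (Real.sqrt w - (p - Real.sqrt D) / (2 * r * Real.sqrt (c * Γ0))) *
      (Real.sqrt w - (p + Real.sqrt D) / (2 * r * Real.sqrt (c * Γ0))) = 0 := by
    have hden : (2 * r * Real.sqrt (c * Γ0)) ≠ 0 := by positivity
    field_simp
    linear_combination (4 * r * Real.sqrt (c * Γ0)) * hmain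
      - (4 * r * (1 - r)) * hscg - hsD - hD
      + (4 * r ^ 2 * Real.sqrt (c * Γ0) ^ 2) * hsw
  rcases mul_eq_zero.mp hfac with h | h
  · left
    rw [← hsw, sub_eq_zero.mp h]
  · right
    rw [← hsw, sub_eq_zero.mp h]
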